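/- Let 𝒯 be a dyadic family of sets (any two members are nested or disjoint) in a finite measure space, and define the maximal operator M_𝒯 f(z) = sup_{T ∈ 𝒯, z ∈ T} ⟨|f|⟩_T. Then for 1 < p < ∞, ‖M_𝒯 f‖_{L^p} ≤ p' ‖f‖_{L^p}, where p' = p/(p-1). -/

import Mathlib

open MeasureTheory Set

open scoped ENNReal

lemma finset_cover8 {α : Type*} [MeasurableSpace α] (μ ν : Measure α) (s : ℝ≥0∞)
    (𝒮 : Finset (Set α)) (hm : ∀ u ∈ 𝒮, MeasurableSet u)
    (hd : ∀ u ∈ 𝒮, ∀ v ∈ 𝒮, u ⊆ v ∨ v ⊆ u ∨ Disjoint u v)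
    (hb : ∀ u ∈ 𝒮, s * μ u ≤ ν u) :
    s * μ (⋃ u ∈ 𝒮, u) ≤ ν (⋃ u ∈ 𝒮, u) := by
  classical
  set Max : Finset (Set α) := 𝒮.filter (fun u => ∀ v ∈ 𝒮, u ⊆ v → u = v) with hMax
  have hMaxsub : Max ⊆ 𝒮 := Finset.filter_subset _ _
  have hext : ∀ u ∈ 𝒮, ∃ v ∈ Max, u ⊆ v := by
    intro u hu
    obtain ⟨v, hv, hvmax⟩ := Set.Finite.exists_maximalFor id {v | v ∈ 𝒮 ∧ u ⊆ v}
      (Set.Finite.subset 𝒮.finite_toSet (fun v hv => hv.1)) ⟨u, hu, subset_rfl⟩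
    refine ⟨v, ?_, hv.2⟩
    rw [hMax, Finset.mem_filter]
    exact ⟨hv.1, fun w hw hvw => hvw.antisymm (hvmax (j := w) ⟨hw, hv.2.trans hvw⟩ hvw)⟩
  have hunion : (⋃ u ∈ 𝒮, u) = ⋃ u ∈ Max, u := by
    apply Set.Subset.antisymm
    · intro x hx
      rw [Set.mem_iUnion₂] at hx ⊢
      obtain ⟨u, hu, hxu⟩ := hx
      obtain ⟨v, hv, huv⟩ := hext u hu
      exact ⟨v, hv, huv hxu⟩
    · exact Set.iUnion₂_mono' fun u hu => ⟨u, hMaxsub hu, subset_rfl⟩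
  have hdisj : (↑Max : Set (Set α)).PairwiseDisjoint id := by
    intro u hu v hv huv
    rw [Finset.mem_coe, hMax, Finset.mem_filter] at hu hv
    rcases hd u hu.1 v hv.1 with h | h | h
    · exact absurd (hu.2 v hv.1 h) huv
    · exact absurd (hv.2 u hu.1 h).symm huv
    · exact h
  rw [hunion]
  calc s * μ (⋃ u ∈ Max, u) ≤ s * ∑ u ∈ Max, μ u := by
        gcongr
        exact measure_biUnion_finset_le Max id
    _ = ∑ u ∈ Max, s * μ u := by rw [Finset.mul_sum]
    _ ≤ ∑ u ∈ Max, ν u := Finset.sum_le_sum fun u hu => hb u (hMaxsub hu)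
    _ = ν (⋃ u ∈ Max, u) := (measure_biUnion_finset hdisj fun u hu => hm u (hMaxsub hu)).symm

lemma countable_cover8 {α ι : Type*} [MeasurableSpace α] [Countable ι] (μ ν : Measure α)
    (T : ι → Set α) (hTm : ∀ i, MeasurableSet (T i))
    (hdyadic : ∀ i j, T i ⊆ T j ∨ T j ⊆ T i ∨ Disjoint (T i) (T j))
    (s : ℝ≥0∞) (S : Set ι) (hb : ∀ i ∈ S, s * μ (T i) ≤ ν (T i)) :
    s * μ (⋃ i ∈ S, T i) ≤ ν (⋃ i ∈ S, T i) := by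
  classical
  set 𝒰 : {F : Finset ι // ↑F ⊆ S} → Set α := fun F => ⋃ i ∈ F.1, T i with h𝒰
  have hdir : Directed (· ⊆ ·) 𝒰 := by
    intro F G
    refine ⟨⟨F.1 ∪ G.1, ?_⟩, ?_, ?_⟩
    · rw [Finset.coe_union]
      exact Set.union_subset F.2 G.2
    · exact Set.iUnion₂_mono' fun i hi => ⟨i, Finset.mem_union_left _ hi, subset_rfl⟩
    · exact Set.iUnion₂_mono' fun i hi => ⟨i, Finset.mem_union_right _ hi, subset_rfl⟩
  have hcup : (⋃ i ∈ S, T i) = ⋃ F, 𝒰 F := by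
    apply Set.Subset.antisymm
    · intro x hx
      rw [Set.mem_iUnion₂] at hx
      obtain ⟨i, hi, hxi⟩ := hx
      rw [Set.mem_iUnion]
      refine ⟨⟨{i}, by simpa using hi⟩, ?_⟩
      simp only [h𝒰, Finset.mem_singleton, Set.mem_iUnion]
      exact ⟨i, rfl, hxi⟩
    · refine Set.iUnion_subset fun F => ?_
      exact Set.iUnion₂_mono' fun i hi => ⟨i, F.2 hi, subset_rfl⟩
  rw [hcup, hdir.measure_iUnion, ENNReal.mul_iSup]
  refine iSup_le fun F => ?_
  have hsub : 𝒰 F ⊆ ⋃ F, 𝒰 F := Set.subset_iUnion 𝒰 F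
  refine le_trans ?_ (measure_mono hsub)
  have himg : 𝒰 F = ⋃ u ∈ F.1.image T, u := by
    ext x
    simp only [h𝒰, Set.mem_iUnion, exists_prop, Finset.mem_image]
    constructor
    · rintro ⟨i, hi, hx⟩; exact ⟨T i, ⟨i, hi, rfl⟩, hx⟩
    · rintro ⟨u, ⟨i, hi, rfl⟩, hx⟩; exact ⟨i, hi, hx⟩
  rw [himg]
  refine finset_cover8 μ ν s _ ?_ ?_ ?_
  · rintro u hu
    obtain ⟨i, _, rfl⟩ := Finset.mem_image.1 hu
    exact hTm i
  · rintro u hu v hv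
    obtain ⟨i, _, rfl⟩ := Finset.mem_image.1 hu
    obtain ⟨j, _, rfl⟩ := Finset.mem_image.1 hv
    exact hdyadic i j
  · rintro u hu
    obtain ⟨i, hi, rfl⟩ := Finset.mem_image.1 hu
    exact hb i (F.2 hi)

/-- For a dyadic family `𝒯` (any two members nested or disjoint) in a finite
measure space, the dyadic maximal operator `M_𝒯 f = sup_{T ∋ z} ⟨|f|⟩_T` satisfies
`‖M_𝒯 f‖_{L^p} ≤ p' ‖f‖_{L^p}` for `1 < p < ∞`, `p' = p/(p-1)`. -/
theorem stmt8 {α ι : Type*} [MeasurableSpace α] [Countable ι] (μ : Measure α)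
    [IsFiniteMeasure μ]
    (T : ι → Set α) (hTm : ∀ i, MeasurableSet (T i))
    (hTpos : ∀ i, 0 < μ (T i)) (hTfin : ∀ i, μ (T i) < ⊤)
    (hdyadic : ∀ i j, T i ⊆ T j ∨ T j ⊆ T i ∨ Disjoint (T i) (T j))
    (f : α → ℝ) (hfint : Integrable f μ)
    (p : ℝ) (hp : 1 < p) (hfp : Integrable (fun x => |f x| ^ p) μ)
    (M : α → ℝ)
    (hM : ∀ z, M z = ⨆ i, (T i).indicator
      (fun _ => (μ (T i)).toReal⁻¹ * ∫ x in T i, |f x| ∂μ) z)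
    (hMp : Integrable (fun x => M x ^ p) μ) :
    (∫ x, M x ^ p ∂μ) ^ p⁻¹ ≤ (p / (p - 1)) * (∫ x, |f x| ^ p ∂μ) ^ p⁻¹ := by
  classical
  have hp0 : (0:ℝ) < p := lt_trans one_pos hp
  have hp1 : (0:ℝ) < p - 1 := by linarith
  set g : α → ℝ≥0∞ := fun x => ENNReal.ofReal |f x| with hg
  have hgmeas : AEMeasurable g μ := ENNReal.measurable_ofReal.comp_aemeasurable
    hfint.abs.aemeasurable
  set ν : Measure α := μ.withDensity g with hν
  have hνuniv : ν Set.univ ≠ ∞ := by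
    rw [hν, withDensity_apply g MeasurableSet.univ, Measure.restrict_univ]
    exact ((hasFiniteIntegral_iff_ofReal (ae_of_all μ fun x => abs_nonneg (f x))).1
      hfint.abs.2).ne
  haveI : IsFiniteMeasure ν := ⟨lt_top_iff_ne_top.mpr hνuniv⟩
  set c' : ι → ℝ≥0∞ := fun i => ν (T i) / μ (T i) with hc'
  have hc'top : ∀ i, c' i ≠ ∞ := fun i =>
    (ENNReal.div_lt_top (measure_ne_top ν _) (hTpos i).ne').ne
  have hc'mul : ∀ i, c' i * μ (T i) = ν (T i) := fun i =>
    ENNReal.div_mul_cancel (hTpos i).ne' (hTfin i).ne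
  -- rewrite M in terms of c'
  have hMz : ∀ z, M z = ⨆ i, (T i).indicator (fun _ => (c' i).toReal) z := by
    intro z
    rw [hM z]
    refine iSup_congr fun i => ?_
    have h1 : ∫ x in T i, |f x| ∂μ = (∫⁻ x in T i, ENNReal.ofReal |f x| ∂μ).toReal := by
      rw [integral_eq_lintegral_of_nonneg_ae (ae_of_all _ fun x => abs_nonneg (f x))
        hfint.abs.aestronglyMeasurable.restrict]
    have h2 : (μ (T i)).toReal⁻¹ * ∫ x in T i, |f x| ∂μ = (c' i).toReal := by
      rw [h1, hc', ENNReal.toReal_div, hν, withDensity_apply g (hTm i), inv_mul_eq_div]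
    rw [h2]
  have hMnn : ∀ z, 0 ≤ M z := by
    intro z
    rw [hMz z]
    exact Real.iSup_nonneg fun i =>
      Set.indicator_nonneg (fun _ _ => ENNReal.toReal_nonneg) z
  set Mt : α → ℝ≥0∞ := fun x => ⨆ i, (T i).indicator (fun _ => c' i) x with hMt
  have hMtmeas : Measurable Mt :=
    Measurable.iSup fun i => measurable_const.indicator (hTm i)
  have hUeq : ∀ s : ℝ≥0∞, {x | s < Mt x} = ⋃ i ∈ {j | s < c' j}, T i := by
    intro s
    ext x
    simp only [Set.mem_setOf_eq, Set.mem_iUnion, exists_prop, hMt, lt_iSup_iff]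
    constructor
    · rintro ⟨i, hi⟩
      by_cases hx : x ∈ T i
      · rw [Set.indicator_of_mem hx] at hi; exact ⟨i, hi, hx⟩
      · rw [Set.indicator_of_notMem hx] at hi
        exact absurd hi (not_lt.2 (zero_le : 0 ≤ s))
    · rintro ⟨i, hci, hx⟩
      exact ⟨i, by rwa [Set.indicator_of_mem hx]⟩
  have hcover : ∀ s : ℝ≥0∞, s * μ {x | s < Mt x} ≤ ν {x | s < Mt x} := by
    intro s
    rw [hUeq s]
    exact countable_cover8 μ ν T hTm hdyadic s _
      (fun i hi => (mul_le_mul_left (le_of_lt hi) _).trans (hc'mul i).le)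
  have hMtop : μ {x | Mt x = ∞} = 0 := by
    by_contra h0
    have hlt : ν Set.univ / μ {x | Mt x = ∞} ≠ ∞ :=
      (ENNReal.div_lt_top hνuniv h0).ne
    obtain ⟨n, hn⟩ := ENNReal.exists_nat_gt hlt
    have h1 : {x | Mt x = ∞} ⊆ {x | (n:ℝ≥0∞) < Mt x} := by
      intro x hx
      simp only [Set.mem_setOf_eq] at hx ⊢
      rw [hx]
      exact ENNReal.natCast_lt_top n
    have h2 : (n:ℝ≥0∞) * μ {x | Mt x = ∞} ≤ ν Set.univ :=
      le_trans (mul_le_mul_right (measure_mono h1) _)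
        ((hcover n).trans (measure_mono (Set.subset_univ _)))
    have h3 : ν Set.univ < n * μ {x | Mt x = ∞} := by
      rw [← ENNReal.div_lt_iff (Or.inl h0) (Or.inl (measure_ne_top μ _))]
      exact hn
    exact absurd h2 (not_le.2 h3)
  have hMae : ∀ᵐ x ∂μ, ENNReal.ofReal (M x) = Mt x := by
    rw [MeasureTheory.ae_iff]
    refine measure_mono_null ?_ hMtop
    intro x hx
    simp only [Set.mem_setOf_eq] at hx ⊢
    by_contra hfin
    apply hx
    have key1 : ∀ i, (T i).indicator (fun _ => c' i) x =
        ENNReal.ofReal ((T i).indicator (fun _ => (c' i).toReal) x) := by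
      intro i
      by_cases hxi : x ∈ T i
      · rw [Set.indicator_of_mem hxi, Set.indicator_of_mem hxi,
          ENNReal.ofReal_toReal (hc'top i)]
      · rw [Set.indicator_of_notMem hxi, Set.indicator_of_notMem hxi,
          ENNReal.ofReal_zero]
    have bound : ∀ i, (T i).indicator (fun _ => (c' i).toReal) x ≤ (Mt x).toReal := by
      intro i
      have hle : (T i).indicator (fun _ => c' i) x ≤ Mt x :=
        le_iSup (fun i => (T i).indicator (fun _ => c' i) x) i
      rw [key1 i] at hle
      have hnn : 0 ≤ (T i).indicator (fun _ => (c' i).toReal) x :=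
        Set.indicator_nonneg (fun _ _ => ENNReal.toReal_nonneg) x
      calc (T i).indicator (fun _ => (c' i).toReal) x
          = (ENNReal.ofReal ((T i).indicator (fun _ => (c' i).toReal) x)).toReal := by
            rw [ENNReal.toReal_ofReal hnn]
        _ ≤ (Mt x).toReal := ENNReal.toReal_mono hfin hle
    have le1 : ENNReal.ofReal (M x) ≤ Mt x := by
      rw [hMz x]
      exact ENNReal.ofReal_le_of_le_toReal (Real.iSup_le bound ENNReal.toReal_nonneg)
    have le2 : Mt x ≤ ENNReal.ofReal (M x) := by
      refine iSup_le fun i => ?_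
      rw [key1 i]
      refine ENNReal.ofReal_le_ofReal ?_
      rw [hMz x]
      exact le_ciSup ⟨(Mt x).toReal, by rintro y ⟨i, rfl⟩; exact bound i⟩ i
    exact le_antisymm le1 le2
  have hMaem : AEMeasurable M μ := by
    have hMeq : M = fun x => (M x ^ p) ^ p⁻¹ := by
      funext x
      rw [← Real.rpow_mul (hMnn x), mul_inv_cancel₀ hp0.ne', Real.rpow_one]
    rw [hMeq]
    exact hMp.aemeasurable.pow aemeasurable_const
  set A : ℝ≥0∞ := ∫⁻ x, ENNReal.ofReal (|f x| ^ p) ∂μ with hA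
  set B : ℝ≥0∞ := ∫⁻ x, ENNReal.ofReal (M x ^ p) ∂μ with hB
  have hAtop : A ≠ ∞ := by
    rw [hA]
    exact ((hasFiniteIntegral_iff_ofReal (ae_of_all μ fun x =>
      Real.rpow_nonneg (abs_nonneg (f x)) p)).1 hfp.2).ne
  have hBtop : B ≠ ∞ := by
    rw [hB]
    exact ((hasFiniteIntegral_iff_ofReal (ae_of_all μ fun x =>
      Real.rpow_nonneg (hMnn x) p)).1 hMp.2).ne
  -- layer cake
  have layer := lintegral_rpow_eq_lintegral_meas_lt_mul μ (ae_of_all μ hMnn) hMaem hp0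
  -- pointwise bound on the distribution function
  have step1 : ∀ t ∈ Ioi (0:ℝ), μ {a | t < M a} * ENNReal.ofReal (t ^ (p-1)) ≤
      ν {x | ENNReal.ofReal t < Mt x} * ENNReal.ofReal (t ^ (p-2)) := by
    intro t ht
    rw [Set.mem_Ioi] at ht
    have hsub : {a | t < M a} ⊆ {x | ENNReal.ofReal t < Mt x} := by
      intro x hx
      simp only [Set.mem_setOf_eq] at hx ⊢
      have hex : ∃ i, t < (T i).indicator (fun _ => (c' i).toReal) x := by
        by_contra hc
        push_neg at hc
        have := Real.iSup_le hc ht.le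
        rw [← hMz x] at this
        exact absurd hx (not_lt.2 this)
      obtain ⟨i, hi⟩ := hex
      by_cases hxi : x ∈ T i
      · rw [Set.indicator_of_mem hxi] at hi
        have h1 : ENNReal.ofReal t < c' i := by
          rw [← ENNReal.ofReal_toReal (hc'top i)]
          exact (ENNReal.ofReal_lt_ofReal_iff (lt_trans ht hi)).2 hi
        refine lt_of_lt_of_le h1 ?_
        have : (T i).indicator (fun _ => c' i) x = c' i := Set.indicator_of_mem hxi _
        rw [← this]
        exact le_iSup (fun i => (T i).indicator (fun _ => c' i) x) i
      · rw [Set.indicator_of_notMem hxi] at hi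
        exact absurd hi (not_lt.2 ht.le)
    have hpow : ENNReal.ofReal (t ^ (p-1)) =
        ENNReal.ofReal t * ENNReal.ofReal (t ^ (p-2)) := by
      rw [← ENNReal.ofReal_mul ht.le]
      congr 1
      rw [show p - 1 = 1 + (p-2) by ring, Real.rpow_add ht, Real.rpow_one]
    calc μ {a | t < M a} * ENNReal.ofReal (t ^ (p-1))
        ≤ μ {x | ENNReal.ofReal t < Mt x} * ENNReal.ofReal (t ^ (p-1)) :=
          mul_le_mul_left (measure_mono hsub) _
      _ = (ENNReal.ofReal t * μ {x | ENNReal.ofReal t < Mt x}) *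
          ENNReal.ofReal (t ^ (p-2)) := by rw [hpow]; ring
      _ ≤ ν {x | ENNReal.ofReal t < Mt x} * ENNReal.ofReal (t ^ (p-2)) :=
          mul_le_mul_left (hcover (ENNReal.ofReal t)) _
  -- measurability for the t-integral
  have hmono : Antitone (fun t : ℝ => ν {x | ENNReal.ofReal t < Mt x}) := by
    intro t t' htt'
    exact measure_mono fun x hx => lt_of_le_of_lt (ENNReal.ofReal_le_ofReal htt') hx
  have hmeas_t : Measurable (fun t : ℝ =>
      ν {x | ENNReal.ofReal t < Mt x} * ENNReal.ofReal (t ^ (p-2))) :=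
    hmono.measurable.mul ((measurable_id.pow_const (p-2)).ennreal_ofReal)
  have keyB : B ≤ ENNReal.ofReal p *
      ∫⁻ t in Ioi (0:ℝ), ν {x | ENNReal.ofReal t < Mt x} * ENNReal.ofReal (t ^ (p-2)) := by
    rw [hB, layer]
    exact mul_le_mul_right (setLIntegral_mono hmeas_t step1) _
  -- Fubini
  set H : ℝ → α → ℝ≥0∞ := fun t x =>
    {y | ENNReal.ofReal t < Mt y}.indicator (fun _ => ENNReal.ofReal (t ^ (p-2))) x with hH
  have hHset : ∀ t : ℝ, MeasurableSet {y | ENNReal.ofReal t < Mt y} := fun t =>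
    measurableSet_lt measurable_const hMtmeas
  have hHint : ∀ t : ℝ, ∫⁻ x, H t x ∂ν =
      ν {x | ENNReal.ofReal t < Mt x} * ENNReal.ofReal (t ^ (p-2)) := by
    intro t
    rw [hH]
    rw [lintegral_indicator (hHset t), setLIntegral_const, mul_comm]
  have hHmeas : AEMeasurable (Function.uncurry H)
      ((volume.restrict (Ioi (0:ℝ))).prod ν) := by
    have : Function.uncurry H = fun q : ℝ × α =>
        Set.indicator {q : ℝ × α | ENNReal.ofReal q.1 < Mt q.2}
          (fun q => ENNReal.ofReal (q.1 ^ (p-2))) q := by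
      funext q
      simp only [Function.uncurry, hH, Set.indicator_apply, Set.mem_setOf_eq]
    rw [this]
    refine Measurable.aemeasurable ?_
    refine Measurable.indicator ?_ ?_
    · exact (measurable_fst.pow_const (p-2)).ennreal_ofReal
    · exact measurableSet_lt (measurable_fst.ennreal_ofReal) (hMtmeas.comp measurable_snd)
  have hswap : ∫⁻ t in Ioi (0:ℝ), ∫⁻ x, H t x ∂ν =
      ∫⁻ x, (∫⁻ t in Ioi (0:ℝ), H t x) ∂ν := lintegral_lintegral_swap hHmeas
  -- inner integral bound
  have hinner : ∀ x, (∫⁻ t in Ioi (0:ℝ), H t x) ≤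
      Mt x ^ (p-1) * ENNReal.ofReal ((p-1)⁻¹) := by
    intro x
    by_cases hx : Mt x = ∞
    · rw [hx, ENNReal.top_rpow_of_pos hp1, ENNReal.top_mul]
      · exact le_top
      · exact (ENNReal.ofReal_pos.mpr (by positivity)).ne'
    · set r : ℝ := (Mt x).toReal with hr
      have hr0 : 0 ≤ r := ENNReal.toReal_nonneg
      have hstep : ∀ t ∈ Ioi (0:ℝ), H t x ≤
          (Ioo (0:ℝ) r).indicator (fun t => ENNReal.ofReal (t ^ (p-2))) t := by
        intro t ht
        rw [Set.mem_Ioi] at ht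
        simp only [hH, Set.indicator_apply, Set.mem_setOf_eq, Set.mem_Ioo]
        by_cases hlt : ENNReal.ofReal t < Mt x
        · rw [if_pos hlt]
          have htr : t < r := by
            have := (ENNReal.toReal_lt_toReal ENNReal.ofReal_ne_top hx).2 hlt
            rwa [ENNReal.toReal_ofReal ht.le] at this
          rw [if_pos ⟨ht, htr⟩]
        · rw [if_neg hlt]
          exact zero_le
      have hint : IntegrableOn (fun t : ℝ => t ^ (p-2)) (Ioo 0 r) volume :=
        (intervalIntegral.intervalIntegrable_rpow' (by linarith : (-1:ℝ) < p-2)).1.mono_set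
          Set.Ioo_subset_Ioc_self
      have hnn2 : 0 ≤ᵐ[volume.restrict (Ioo (0:ℝ) r)] fun t : ℝ => t ^ (p-2) := by
        filter_upwards [self_mem_ae_restrict measurableSet_Ioo] with t ht
        exact Real.rpow_nonneg ht.1.le _
      have hval : ∫ t in Ioo (0:ℝ) r, t ^ (p-2) = r ^ (p-1) / (p-1) := by
        rw [← integral_Ioc_eq_integral_Ioo, ← intervalIntegral.integral_of_le hr0,
          integral_rpow (Or.inl (by linarith : (-1:ℝ) < p-2)),
          Real.zero_rpow (by linarith : p - 2 + 1 ≠ 0),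
          show p - 2 + 1 = p - 1 by ring, sub_zero]
      calc (∫⁻ t in Ioi (0:ℝ), H t x)
          ≤ ∫⁻ t in Ioi (0:ℝ),
              (Ioo (0:ℝ) r).indicator (fun t => ENNReal.ofReal (t ^ (p-2))) t :=
            setLIntegral_mono (((measurable_id.pow_const (p-2)).ennreal_ofReal).indicator
              measurableSet_Ioo) hstep
        _ ≤ ∫⁻ t, (Ioo (0:ℝ) r).indicator (fun t => ENNReal.ofReal (t ^ (p-2))) t :=
            setLIntegral_le_lintegral _ _
        _ = ∫⁻ t in Ioo (0:ℝ) r, ENNReal.ofReal (t ^ (p-2)) :=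
            lintegral_indicator measurableSet_Ioo _
        _ = ENNReal.ofReal (∫ t in Ioo (0:ℝ) r, t ^ (p-2)) :=
            (ofReal_integral_eq_lintegral_ofReal hint hnn2).symm
        _ = ENNReal.ofReal (r ^ (p-1) / (p-1)) := by rw [hval]
        _ = Mt x ^ (p-1) * ENNReal.ofReal ((p-1)⁻¹) := by
            rw [div_eq_mul_inv, ENNReal.ofReal_mul (Real.rpow_nonneg hr0 _)]
            congr 1
            rw [← ENNReal.ofReal_rpow_of_nonneg hr0 (by linarith : (0:ℝ) ≤ p-1),
              ENNReal.ofReal_toReal hx]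
  -- assemble the chain
  have hconst : ENNReal.ofReal p * ENNReal.ofReal ((p-1)⁻¹) = ENNReal.ofReal (p/(p-1)) := by
    rw [← ENNReal.ofReal_mul hp0.le, div_eq_mul_inv]
  have keyB2 : B ≤ ENNReal.ofReal (p/(p-1)) *
      ∫⁻ x, g x * ENNReal.ofReal (M x) ^ (p-1) ∂μ := by
    calc B ≤ ENNReal.ofReal p * ∫⁻ t in Ioi (0:ℝ),
            ν {x | ENNReal.ofReal t < Mt x} * ENNReal.ofReal (t ^ (p-2)) := keyB
      _ = ENNReal.ofReal p * ∫⁻ t in Ioi (0:ℝ), ∫⁻ x, H t x ∂ν := by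
          congr 1
          exact lintegral_congr fun t => (hHint t).symm
      _ = ENNReal.ofReal p * ∫⁻ x, (∫⁻ t in Ioi (0:ℝ), H t x) ∂ν := by rw [hswap]
      _ ≤ ENNReal.ofReal p * ∫⁻ x, Mt x ^ (p-1) * ENNReal.ofReal ((p-1)⁻¹) ∂ν :=
          mul_le_mul_right (lintegral_mono hinner) _
      _ = ENNReal.ofReal p * ((∫⁻ x, Mt x ^ (p-1) ∂ν) * ENNReal.ofReal ((p-1)⁻¹)) := by
          rw [lintegral_mul_const' _ _ ENNReal.ofReal_ne_top]
      _ = ENNReal.ofReal (p/(p-1)) * ∫⁻ x, Mt x ^ (p-1) ∂ν := by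
          rw [← hconst]; ring
      _ = ENNReal.ofReal (p/(p-1)) * ∫⁻ x, g x * Mt x ^ (p-1) ∂μ := by
          congr 1
          rw [hν, lintegral_withDensity_eq_lintegral_mul₀ hgmeas
            ((hMtmeas.pow_const (p-1)).aemeasurable)]
          exact lintegral_congr fun x => rfl
      _ = ENNReal.ofReal (p/(p-1)) * ∫⁻ x, g x * ENNReal.ofReal (M x) ^ (p-1) ∂μ := by
          congr 1
          refine lintegral_congr_ae ?_
          filter_upwards [hMae] with x hx
          rw [hx]
  -- Hölder
  have hpq : p.HolderConjugate (p/(p-1)) := Real.HolderConjugate.conjExponent hp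
  have hofM : AEMeasurable (fun x => ENNReal.ofReal (M x)) μ :=
    ENNReal.measurable_ofReal.comp_aemeasurable hMaem
  have holder := ENNReal.lintegral_mul_le_Lp_mul_Lq μ hpq hgmeas
    (hofM.pow aemeasurable_const : AEMeasurable (fun x => ENNReal.ofReal (M x) ^ (p-1)) μ)
  simp only [Pi.mul_apply] at holder
  have hgp : ∀ x, g x ^ p = ENNReal.ofReal (|f x| ^ p) := fun x =>
    ENNReal.ofReal_rpow_of_nonneg (abs_nonneg (f x)) hp0.le
  have hMq : ∀ x, (ENNReal.ofReal (M x) ^ (p-1)) ^ (p/(p-1)) = ENNReal.ofReal (M x ^ p) := by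
    intro x
    rw [← ENNReal.rpow_mul]
    have : (p-1) * (p/(p-1)) = p := by field_simp
    rw [this]
    exact ENNReal.ofReal_rpow_of_nonneg (hMnn x) hp0.le
  simp only [hgp, hMq] at holder
  have key : B ≤ (ENNReal.ofReal (p/(p-1)) * A ^ (1/p)) * B ^ (1/(p/(p-1))) := by
    calc B ≤ ENNReal.ofReal (p/(p-1)) * ∫⁻ x, g x * ENNReal.ofReal (M x) ^ (p-1) ∂μ := keyB2
      _ ≤ ENNReal.ofReal (p/(p-1)) * (A ^ (1/p) * B ^ (1/(p/(p-1)))) :=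
          mul_le_mul_right (by rw [hA, hB]; exact holder) _
      _ = (ENNReal.ofReal (p/(p-1)) * A ^ (1/p)) * B ^ (1/(p/(p-1))) := by ring
  have hENN : B ^ p⁻¹ ≤ ENNReal.ofReal (p/(p-1)) * A ^ p⁻¹ := by
    by_cases hB0 : B = 0
    · rw [hB0, ENNReal.zero_rpow_of_pos (by positivity)]
      exact zero_le
    · set q : ℝ := p/(p-1) with hqdef
      have hq0 : 0 < q := hpq.symm.pos
      have h1q : B ^ (1/q) ≠ 0 := (ENNReal.rpow_pos (pos_iff_ne_zero.mpr hB0) hBtop).ne'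
      have h2q : B ^ (1/q) ≠ ∞ :=
        ENNReal.rpow_ne_top_of_nonneg (by positivity) hBtop
      have hsplit : B = B ^ (1/p) * B ^ (1/q) := by
        rw [← ENNReal.rpow_add _ _ hB0 hBtop]
        have : 1/p + 1/q = 1 := by
          rw [one_div, one_div]
          exact hpq.inv_add_inv_eq_inv.trans inv_one
        rw [this, ENNReal.rpow_one]
      have key2 : B ^ (1/p) * B ^ (1/q) ≤
          (ENNReal.ofReal (p/(p-1)) * A ^ (1/p)) * B ^ (1/q) := by
        rw [← hsplit]; exact key
      have := (ENNReal.mul_le_mul_iff_left h1q h2q).mp key2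
      rwa [one_div] at this
  -- convert to reals
  have int1 : ∫ x, M x ^ p ∂μ = B.toReal := by
    rw [hB, integral_eq_lintegral_of_nonneg_ae
      (ae_of_all _ fun x => Real.rpow_nonneg (hMnn x) p) hMp.1]
  have int2 : ∫ x, |f x| ^ p ∂μ = A.toReal := by
    rw [hA, integral_eq_lintegral_of_nonneg_ae
      (ae_of_all _ fun x => Real.rpow_nonneg (abs_nonneg (f x)) p) hfp.1]
  rw [int1, int2]
  have hRHS : ENNReal.ofReal (p/(p-1)) * A ^ p⁻¹ ≠ ∞ :=
    ENNReal.mul_ne_top ENNReal.ofReal_ne_top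
      (ENNReal.rpow_ne_top_of_nonneg (by positivity) hAtop)
  calc B.toReal ^ p⁻¹ = (B ^ p⁻¹).toReal := ENNReal.toReal_rpow B p⁻¹
    _ ≤ (ENNReal.ofReal (p/(p-1)) * A ^ p⁻¹).toReal := ENNReal.toReal_mono hRHS hENN
    _ = (p/(p-1)) * A.toReal ^ p⁻¹ := by
        rw [ENNReal.toReal_mul, ENNReal.toReal_ofReal (by positivity),
          ENNReal.toReal_rpow]
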